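/- arXiv:2010.14758 — 8 statements merged into one kernel-verified Lean document; each statement's English description precedes it below -/
import Mathlib

section
/- Let ε ∈ (0,1) and let (x,y) ∈ [0,1]² be an (f,g)-fixed point for ε. Then: (i) if x = 0 then y = 0; and (ii) if in addition either P0 = 0 or λ2(0) > 0, then y = 0 implies x = 0. -/
open Polynomial Set

lemma aux_eval_nonneg (p : Polynomial ℝ) (hp : ∀ i, 0 ≤ p.coeff i) {t : ℝ} (ht : 0 ≤ t) :
    0 ≤ p.eval t := by
  rw [Polynomial.eval_eq_sum_range]
  exact Finset.sum_nonneg fun i _ => mul_nonneg (hp i) (pow_nonneg ht i)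

lemma aux_eval_mono (p : Polynomial ℝ) (hp : ∀ i, 0 ≤ p.coeff i) {a b : ℝ} (ha : 0 ≤ a)
    (hab : a ≤ b) : p.eval a ≤ p.eval b := by
  rw [Polynomial.eval_eq_sum_range, Polynomial.eval_eq_sum_range]
  exact Finset.sum_le_sum fun i _ =>
    mul_le_mul_of_nonneg_left (pow_le_pow_left₀ ha hab i) (hp i)

lemma aux_eval_pos_zero (p : Polynomial ℝ) (hp : ∀ i, 0 ≤ p.coeff i) {u : ℝ} (hu : 0 < u)
    (h0 : p.eval u = 0) : p.eval 1 = 0 := by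
  rw [Polynomial.eval_eq_sum_range] at h0 ⊢
  have hz := (Finset.sum_eq_zero_iff_of_nonneg
    (fun i _ => mul_nonneg (hp i) (pow_nonneg hu.le i))).mp h0
  refine Finset.sum_eq_zero fun i hi => ?_
  have := hz i hi
  have hpow : (0:ℝ) < u ^ i := pow_pos hu i
  have : p.coeff i = 0 := by
    rcases mul_eq_zero.mp this with h | h
    · exact h
    · exact absurd h hpow.ne'
  simp [this]

/-- Lemma 2, item 1: for an `(f,g)`-fixed point, `x = 0` implies `y = 0`; and if
`P0 = 0` or `λ2(0) > 0`, then `y = 0` implies `x = 0`. -/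
theorem stmt_1
    (L1 R1 L2 R2 B1 B2 : Polynomial ℝ)
    (hL1c : ∀ i, 0 ≤ L1.coeff i) (hR1c : ∀ i, 0 ≤ R1.coeff i)
    (hL2c : ∀ i, 0 ≤ L2.coeff i) (hR2c : ∀ i, 0 ≤ R2.coeff i)
    (hB1c : ∀ i, 0 ≤ B1.coeff i) (hB2c : ∀ i, 0 ≤ B2.coeff i)
    (hL1one : L1.eval 1 = 1) (hR1one : R1.eval 1 = 1)
    (hL2one : L2.eval 1 = 1) (hR2one : R2.eval 1 = 1)
    (hB1one : B1.eval 1 = 1) (hB2one : B2.eval 1 = 1)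
    (hL1zero : L1.eval 0 = 0) (hB10 : B1.coeff 0 = 0) (hB11 : B1.coeff 1 = 0)
    (hR1nc : ¬ (∀ u : ℝ, R1.eval u = 1))
    (f g : ℝ → ℝ → ℝ → ℝ)
    (hf : ∀ ε x y, f ε x y = ε * L1.eval (1 - R1.eval (1 - x)) * B2.eval (1 - R2.eval (1 - y)))
    (hg : ∀ ε x y, g ε x y = ε * B1.eval (1 - R1.eval (1 - x)) * L2.eval (1 - R2.eval (1 - y)))
    (ε x y : ℝ) (hε : ε ∈ Ioo (0:ℝ) 1)
    (hx : x ∈ Icc (0:ℝ) 1) (hy : y ∈ Icc (0:ℝ) 1)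
    (hfix : x = f ε x y ∧ y = g ε x y) :
    (x = 0 → y = 0) ∧ ((B2.eval 0 = 0 ∨ 0 < L2.eval 0) → y = 0 → x = 0) := by
  obtain ⟨hxf, hyg⟩ := hfix
  rw [hf] at hxf
  rw [hg] at hyg
  have hB1zero : B1.eval 0 = 0 := by
    rw [← Polynomial.coeff_zero_eq_eval_zero]; exact hB10
  constructor
  · intro hx0
    rw [hx0] at hyg
    simpa [hR1one, hB1zero] using hyg
  · rintro (hP0 | hL2pos) hy0
    · rw [hy0] at hxf
      rw [hxf]
      simp [hR2one, hP0]
    · rw [hy0] at hyg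
      simp only [sub_zero, hR2one, sub_self] at hyg
      have hB1u : B1.eval (1 - R1.eval (1 - x)) = 0 := by
        rcases mul_eq_zero.mp hyg.symm with h | h
        · rcases mul_eq_zero.mp h with h' | h'
          · exact absurd h' hε.1.ne'
          · exact h'
        · exact absurd h hL2pos.ne'
      have hu0 : 0 ≤ 1 - R1.eval (1 - x) := by
        have : R1.eval (1 - x) ≤ R1.eval 1 :=
          aux_eval_mono R1 hR1c (by linarith [hx.2]) (by linarith [hx.1])
        linarith [hR1one ▸ this]
      have hu : 1 - R1.eval (1 - x) = 0 := by
        rcases hu0.lt_or_eq with h | h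
        · exact absurd (aux_eval_pos_zero B1 hB1c h hB1u) (by rw [hB1one]; norm_num)
        · exact h.symm
      rw [hxf, hu, hL1zero]
      ring
end

section
/- Let ε ∈ (0,1) and let (x,y) ∈ [0,1]² be an (f,g)-fixed point for ε. Then (x,y) ∈ [0,ε)², i.e., x < ε and y < ε. -/
open Polynomial Set

lemma aux_eval_nonneg_s2 (P : Polynomial ℝ) (hc : ∀ i, 0 ≤ P.coeff i) {t : ℝ} (ht : 0 ≤ t) :
    0 ≤ P.eval t := by
  rw [Polynomial.eval_eq_sum_range]
  exact Finset.sum_nonneg fun i _ => mul_nonneg (hc i) (pow_nonneg ht i)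

lemma aux_eval_le_one (P : Polynomial ℝ) (hc : ∀ i, 0 ≤ P.coeff i) (h1 : P.eval 1 = 1)
    {t : ℝ} (ht0 : 0 ≤ t) (ht1 : t ≤ 1) : P.eval t ≤ 1 := by
  have h1' := Polynomial.eval_eq_sum_range (p := P) (x := (1:ℝ))
  rw [Polynomial.eval_eq_sum_range, ← h1, h1']
  apply Finset.sum_le_sum
  intro i _
  have : t ^ i ≤ 1 ^ i := pow_le_pow_left₀ ht0 ht1 i
  exact mul_le_mul_of_nonneg_left this (hc i)

lemma aux_eval_pos (P : Polynomial ℝ) (hc : ∀ i, 0 ≤ P.coeff i) (h1 : P.eval 1 = 1)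
    {t : ℝ} (ht : 0 < t) : 0 < P.eval t := by
  have hP : P ≠ 0 := by intro h; rw [h] at h1; simp at h1
  obtain ⟨j, hj⟩ : ∃ j, P.coeff j ≠ 0 := by
    by_contra h; push_neg at h; exact hP (Polynomial.ext fun n => by simp [h n])
  have hjle : j ≤ P.natDegree := Polynomial.le_natDegree_of_ne_zero hj
  rw [Polynomial.eval_eq_sum_range]
  have hjmem : j ∈ Finset.range (P.natDegree + 1) := Finset.mem_range.2 (Nat.lt_succ_of_le hjle)
  have : 0 < P.coeff j * t ^ j :=
    mul_pos (lt_of_le_of_ne (hc j) (Ne.symm hj)) (pow_pos ht j)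
  calc (0:ℝ) < P.coeff j * t ^ j := this
    _ ≤ ∑ i ∈ Finset.range (P.natDegree + 1), P.coeff i * t ^ i :=
      Finset.single_le_sum (fun i _ => mul_nonneg (hc i) (pow_nonneg ht.le i)) hjmem

lemma aux_eval_lt_one (P : Polynomial ℝ) (hc : ∀ i, 0 ≤ P.coeff i) (h1 : P.eval 1 = 1)
    (h0 : P.coeff 0 = 0) {t : ℝ} (ht0 : 0 ≤ t) (ht1 : t < 1) : P.eval t < 1 := by
  have hP : P ≠ 0 := by intro h; rw [h] at h1; simp at h1
  obtain ⟨j, hj⟩ : ∃ j, P.coeff j ≠ 0 := by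
    by_contra h; push_neg at h; exact hP (Polynomial.ext fun n => by simp [h n])
  have hjle : j ≤ P.natDegree := Polynomial.le_natDegree_of_ne_zero hj
  have hjmem : j ∈ Finset.range (P.natDegree + 1) := Finset.mem_range.2 (Nat.lt_succ_of_le hjle)
  have hj0 : j ≠ 0 := by intro h; rw [h] at hj; exact hj h0
  have h1' := Polynomial.eval_eq_sum_range (p := P) (x := (1:ℝ))
  rw [Polynomial.eval_eq_sum_range, ← h1, h1']
  apply Finset.sum_lt_sum
  · intro i _
    exact mul_le_mul_of_nonneg_left (pow_le_pow_left₀ ht0 ht1.le i) (hc i)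
  · refine ⟨j, hjmem, ?_⟩
    have : t ^ j < 1 ^ j := by
      rw [one_pow]; exact pow_lt_one₀ ht0 ht1 hj0
    exact mul_lt_mul_of_pos_left this (lt_of_le_of_ne (hc j) (Ne.symm hj))

/-- Lemma 2, item 2: every `(f,g)`-fixed point lies in `[0, ε)²`. -/
theorem stmt_2
    (L1 R1 L2 R2 B1 B2 : Polynomial ℝ)
    (hL1c : ∀ i, 0 ≤ L1.coeff i) (hR1c : ∀ i, 0 ≤ R1.coeff i)
    (hL2c : ∀ i, 0 ≤ L2.coeff i) (hR2c : ∀ i, 0 ≤ R2.coeff i)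
    (hB1c : ∀ i, 0 ≤ B1.coeff i) (hB2c : ∀ i, 0 ≤ B2.coeff i)
    (hL1one : L1.eval 1 = 1) (hR1one : R1.eval 1 = 1)
    (hL2one : L2.eval 1 = 1) (hR2one : R2.eval 1 = 1)
    (hB1one : B1.eval 1 = 1) (hB2one : B2.eval 1 = 1)
    (hL1zero : L1.eval 0 = 0) (hB10 : B1.coeff 0 = 0) (hB11 : B1.coeff 1 = 0)
    (f g : ℝ → ℝ → ℝ → ℝ)
    (hf : ∀ ε x y, f ε x y = ε * L1.eval (1 - R1.eval (1 - x)) * B2.eval (1 - R2.eval (1 - y)))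
    (hg : ∀ ε x y, g ε x y = ε * B1.eval (1 - R1.eval (1 - x)) * L2.eval (1 - R2.eval (1 - y)))
    (ε x y : ℝ) (hε : ε ∈ Ioo (0:ℝ) 1)
    (hx : x ∈ Icc (0:ℝ) 1) (hy : y ∈ Icc (0:ℝ) 1)
    (hfix : x = f ε x y ∧ y = g ε x y) :
    x ∈ Ico (0:ℝ) ε ∧ y ∈ Ico (0:ℝ) ε := by
  obtain ⟨hε0, hε1⟩ := hε
  obtain ⟨hx0, hx1⟩ := hx
  obtain ⟨hy0, hy1⟩ := hy
  obtain ⟨hxf, hyg⟩ := hfix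
  rw [hf] at hxf; rw [hg] at hyg
  -- bounds on inner args
  have h1x0 : (0:ℝ) ≤ 1 - x := by linarith
  have h1x1 : 1 - x ≤ 1 := by linarith
  have h1y0 : (0:ℝ) ≤ 1 - y := by linarith
  have h1y1 : 1 - y ≤ 1 := by linarith
  have hu0 : 0 ≤ 1 - R1.eval (1 - x) := by
    have := aux_eval_le_one R1 hR1c hR1one h1x0 h1x1; linarith
  have hu1 : 1 - R1.eval (1 - x) ≤ 1 := by
    have := aux_eval_nonneg_s2 R1 hR1c h1x0; linarith
  have hv0 : 0 ≤ 1 - R2.eval (1 - y) := by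
    have := aux_eval_le_one R2 hR2c hR2one h1y0 h1y1; linarith
  have hv1 : 1 - R2.eval (1 - y) ≤ 1 := by
    have := aux_eval_nonneg_s2 R2 hR2c h1y0; linarith
  have hL1u0 := aux_eval_nonneg_s2 L1 hL1c hu0
  have hL1u1 := aux_eval_le_one L1 hL1c hL1one hu0 hu1
  have hB2v0 := aux_eval_nonneg_s2 B2 hB2c hv0
  have hB2v1 := aux_eval_le_one B2 hB2c hB2one hv0 hv1
  have hB1u0 := aux_eval_nonneg_s2 B1 hB1c hu0
  have hL2v0 := aux_eval_nonneg_s2 L2 hL2c hv0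
  have hL2v1 := aux_eval_le_one L2 hL2c hL2one hv0 hv1
  -- x ≤ ε hence x < 1
  have hxle : x ≤ ε := by
    calc x = ε * L1.eval (1 - R1.eval (1 - x)) * B2.eval (1 - R2.eval (1 - y)) := hxf
      _ ≤ ε * 1 * 1 := by
          apply mul_le_mul _ hB2v1 hB2v0 (by linarith)
          exact mul_le_mul le_rfl hL1u1 hL1u0 hε0.le
      _ = ε := by ring
  have hxlt1 : x < 1 := lt_of_le_of_lt hxle hε1
  have hR1pos : 0 < R1.eval (1 - x) := aux_eval_pos R1 hR1c hR1one (by linarith)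
  have hult : 1 - R1.eval (1 - x) < 1 := by linarith
  have hL10 : L1.coeff 0 = 0 := by
    rw [Polynomial.coeff_zero_eq_eval_zero]; exact hL1zero
  have hL1lt : L1.eval (1 - R1.eval (1 - x)) < 1 :=
    aux_eval_lt_one L1 hL1c hL1one hL10 hu0 hult
  have hB1lt : B1.eval (1 - R1.eval (1 - x)) < 1 :=
    aux_eval_lt_one B1 hB1c hB1one hB10 hu0 hult
  have hxε : x < ε := by
    calc x = ε * L1.eval (1 - R1.eval (1 - x)) * B2.eval (1 - R2.eval (1 - y)) := hxf
      _ ≤ ε * L1.eval (1 - R1.eval (1 - x)) * 1 :=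
          mul_le_mul_of_nonneg_left hB2v1 (mul_nonneg hε0.le hL1u0)
      _ = ε * L1.eval (1 - R1.eval (1 - x)) := by ring
      _ < ε * 1 := by
          exact mul_lt_mul_of_pos_left hL1lt hε0
      _ = ε := by ring
  have hyε : y < ε := by
    calc y = ε * B1.eval (1 - R1.eval (1 - x)) * L2.eval (1 - R2.eval (1 - y)) := hyg
      _ ≤ ε * B1.eval (1 - R1.eval (1 - x)) * 1 :=
          mul_le_mul_of_nonneg_left hL2v1 (mul_nonneg hε0.le hB1u0)
      _ = ε * B1.eval (1 - R1.eval (1 - x)) := by ring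
      _ < ε * 1 := mul_lt_mul_of_pos_left hB1lt hε0
      _ = ε := by ring
  exact ⟨⟨hx0, hxε⟩, ⟨hy0, hyε⟩⟩
end

section
/- Let (x_l(ε))_{l≥0}, (y_l(ε))_{l≥0} be the density-evolution sequences and let 0 < ε ≤ ε' < 1. Then for all l ≥ 0: x_{l+1}(ε) ≤ x_l(ε) and y_{l+1}(ε) ≤ y_l(ε) (monotonicity in the iteration number), and x_l(ε) ≤ x_l(ε') and y_l(ε) ≤ y_l(ε') (monotonicity in the channel parameter). -/
open Polynomial Set

lemma my_eval_nonneg (P : Polynomial ℝ) (h : ∀ i, 0 ≤ P.coeff i) {x : ℝ} (hx : 0 ≤ x) :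
    0 ≤ P.eval x := by
  rw [Polynomial.eval_eq_sum_range]
  exact Finset.sum_nonneg fun i _ => mul_nonneg (h i) (pow_nonneg hx i)

lemma my_eval_mono (P : Polynomial ℝ) (h : ∀ i, 0 ≤ P.coeff i) {x y : ℝ} (hx : 0 ≤ x)
    (hxy : x ≤ y) : P.eval x ≤ P.eval y := by
  rw [Polynomial.eval_eq_sum_range, Polynomial.eval_eq_sum_range]
  exact Finset.sum_le_sum fun i _ =>
    mul_le_mul_of_nonneg_left (pow_le_pow_left₀ hx hxy i) (h i)

lemma comp_nonneg (L R : Polynomial ℝ) (hL : ∀ i, 0 ≤ L.coeff i) (hR : ∀ i, 0 ≤ R.coeff i)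
    (hRone : R.eval 1 = 1) {x : ℝ} (hx0 : 0 ≤ x) (hx1 : x ≤ 1) :
    0 ≤ L.eval (1 - R.eval (1 - x)) := by
  apply my_eval_nonneg L hL
  have : R.eval (1 - x) ≤ R.eval 1 := my_eval_mono R hR (by linarith) (by linarith)
  linarith [hRone ▸ this]

lemma comp_le_one (L R : Polynomial ℝ) (hL : ∀ i, 0 ≤ L.coeff i) (hR : ∀ i, 0 ≤ R.coeff i)
    (hLone : L.eval 1 = 1) (hRone : R.eval 1 = 1) {x : ℝ} (hx0 : 0 ≤ x) (hx1 : x ≤ 1) :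
    L.eval (1 - R.eval (1 - x)) ≤ 1 := by
  have h1 : 0 ≤ R.eval (1 - x) := my_eval_nonneg R hR (by linarith)
  have h2 : R.eval (1 - x) ≤ R.eval 1 := my_eval_mono R hR (by linarith) (by linarith)
  calc L.eval (1 - R.eval (1 - x)) ≤ L.eval 1 :=
        my_eval_mono L hL (by linarith [hRone ▸ h2]) (by linarith)
    _ = 1 := hLone

lemma comp_mono (L R : Polynomial ℝ) (hL : ∀ i, 0 ≤ L.coeff i) (hR : ∀ i, 0 ≤ R.coeff i)
    (hRone : R.eval 1 = 1) {x x' : ℝ} (hx0 : 0 ≤ x) (hxx' : x ≤ x') (hx'1 : x' ≤ 1) :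
    L.eval (1 - R.eval (1 - x)) ≤ L.eval (1 - R.eval (1 - x')) := by
  have h2 : R.eval (1 - x) ≤ R.eval 1 := my_eval_mono R hR (by linarith) (by linarith)
  have h3 : R.eval (1 - x') ≤ R.eval (1 - x) := my_eval_mono R hR (by linarith) (by linarith)
  exact my_eval_mono L hL (by linarith [hRone ▸ h2]) (by linarith)

/-- Lemma 3: the density-evolution sequences are non-increasing in the iteration number
and non-decreasing in the channel parameter. -/
theorem stmt_4
    (L1 R1 L2 R2 B1 B2 : Polynomial ℝ)
    (hL1c : ∀ i, 0 ≤ L1.coeff i) (hR1c : ∀ i, 0 ≤ R1.coeff i)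
    (hL2c : ∀ i, 0 ≤ L2.coeff i) (hR2c : ∀ i, 0 ≤ R2.coeff i)
    (hB1c : ∀ i, 0 ≤ B1.coeff i) (hB2c : ∀ i, 0 ≤ B2.coeff i)
    (hL1one : L1.eval 1 = 1) (hR1one : R1.eval 1 = 1)
    (hL2one : L2.eval 1 = 1) (hR2one : R2.eval 1 = 1)
    (hB1one : B1.eval 1 = 1) (hB2one : B2.eval 1 = 1)
    (hL1zero : L1.eval 0 = 0) (hB10 : B1.coeff 0 = 0) (hB11 : B1.coeff 1 = 0)
    (f g : ℝ → ℝ → ℝ → ℝ)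
    (hf : ∀ ε x y, f ε x y = ε * L1.eval (1 - R1.eval (1 - x)) * B2.eval (1 - R2.eval (1 - y)))
    (hg : ∀ ε x y, g ε x y = ε * B1.eval (1 - R1.eval (1 - x)) * L2.eval (1 - R2.eval (1 - y)))
    (xs ys : ℝ → ℕ → ℝ)
    (hxs0 : ∀ e, xs e 0 = 1) (hys0 : ∀ e, ys e 0 = 1)
    (hxsrec : ∀ e l, xs e (l + 1) = f e (xs e l) (ys e l))
    (hysrec : ∀ e l, ys e (l + 1) = g e (xs e l) (ys e l))
    (ε ε' : ℝ) (hε : 0 < ε) (hεε' : ε ≤ ε') (hε' : ε' < 1) :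
    ∀ l, (xs ε (l + 1) ≤ xs ε l ∧ ys ε (l + 1) ≤ ys ε l) ∧
      (xs ε l ≤ xs ε' l ∧ ys ε l ≤ ys ε' l) := by
  have hε0 : (0:ℝ) ≤ ε := le_of_lt hε
  have hε'0 : (0:ℝ) ≤ ε' := le_trans hε0 hεε'
  have hε1 : ε ≤ 1 := le_of_lt (lt_of_le_of_lt hεε' hε')
  have hε'1 : ε' ≤ 1 := le_of_lt hε'
  -- generic bounds and monotonicity for a product ε * L(...) * M(...)
  have key : ∀ (L R M S : Polynomial ℝ), (∀ i, 0 ≤ L.coeff i) → (∀ i, 0 ≤ R.coeff i) →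
      (∀ i, 0 ≤ M.coeff i) → (∀ i, 0 ≤ S.coeff i) →
      L.eval 1 = 1 → R.eval 1 = 1 → M.eval 1 = 1 → S.eval 1 = 1 →
      ∀ e e' x x' y y' : ℝ, 0 ≤ e → e ≤ e' → e' ≤ 1 →
        0 ≤ x → x ≤ x' → x' ≤ 1 → 0 ≤ y → y ≤ y' → y' ≤ 1 →
        (0 ≤ e * L.eval (1 - R.eval (1 - x)) * M.eval (1 - S.eval (1 - y)) ∧
         e * L.eval (1 - R.eval (1 - x)) * M.eval (1 - S.eval (1 - y)) ≤ 1 ∧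
         e * L.eval (1 - R.eval (1 - x)) * M.eval (1 - S.eval (1 - y)) ≤
           e' * L.eval (1 - R.eval (1 - x')) * M.eval (1 - S.eval (1 - y'))) := by
    intro L R M S hLc hRc hMc hSc hLo hRo hMo hSo e e' x x' y y' he hee' he'1 hx0 hxx' hx'1
      hy0 hyy' hy'1
    have hx1 : x ≤ 1 := le_trans hxx' hx'1
    have hy1 : y ≤ 1 := le_trans hyy' hy'1
    have hx'0 : 0 ≤ x' := le_trans hx0 hxx'
    have hy'0 : 0 ≤ y' := le_trans hy0 hyy'
    have hLx0 := comp_nonneg L R hLc hRc hRo hx0 hx1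
    have hLx1 := comp_le_one L R hLc hRc hLo hRo hx0 hx1
    have hLx'0 := comp_nonneg L R hLc hRc hRo hx'0 hx'1
    have hLx'1 := comp_le_one L R hLc hRc hLo hRo hx'0 hx'1
    have hMy0 := comp_nonneg M S hMc hSc hSo hy0 hy1
    have hMy1 := comp_le_one M S hMc hSc hMo hSo hy0 hy1
    have hMy'1 := comp_le_one M S hMc hSc hMo hSo hy'0 hy'1
    have hLmono := comp_mono L R hLc hRc hRo hx0 hxx' hx'1
    have hMmono := comp_mono M S hMc hSc hSo hy0 hyy' hy'1
    refine ⟨mul_nonneg (mul_nonneg he hLx0) hMy0, ?_, ?_⟩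
    · have h1 : e * L.eval (1 - R.eval (1 - x)) ≤ 1 := by
        nlinarith
      nlinarith [mul_nonneg he hLx0]
    · apply mul_le_mul _ hMmono hMy0
      · exact mul_nonneg (le_trans he hee') hLx'0
      · exact mul_le_mul hee' hLmono hLx0 (le_trans he hee')
  -- strengthened induction
  suffices H : ∀ l, ((0 ≤ xs ε l ∧ xs ε l ≤ 1) ∧ (0 ≤ ys ε l ∧ ys ε l ≤ 1) ∧
      (0 ≤ xs ε' l ∧ xs ε' l ≤ 1) ∧ (0 ≤ ys ε' l ∧ ys ε' l ≤ 1)) ∧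
      (xs ε (l + 1) ≤ xs ε l ∧ ys ε (l + 1) ≤ ys ε l) ∧
      (xs ε l ≤ xs ε' l ∧ ys ε l ≤ ys ε' l) by
    intro l; exact (H l).2
  intro l
  induction l with
  | zero =>
    have hx1 : ∀ e, 0 ≤ e → e ≤ 1 → (0 ≤ xs e 1 ∧ xs e 1 ≤ 1) ∧ xs e 1 ≤ xs e 0 := by
      intro e he0 he1
      have := key L1 R1 B2 R2 hL1c hR1c hB2c hR2c hL1one hR1one hB2one hR2one
        e e 1 1 1 1 he0 le_rfl he1 zero_le_one le_rfl le_rfl zero_le_one le_rfl le_rfl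
      rw [hxsrec, hxs0, hys0, hf]
      exact ⟨⟨this.1, this.2.1⟩, this.2.1⟩
    have hy1 : ∀ e, 0 ≤ e → e ≤ 1 → (0 ≤ ys e 1 ∧ ys e 1 ≤ 1) ∧ ys e 1 ≤ ys e 0 := by
      intro e he0 he1
      have := key B1 R1 L2 R2 hB1c hR1c hL2c hR2c hB1one hR1one hL2one hR2one
        e e 1 1 1 1 he0 le_rfl he1 zero_le_one le_rfl le_rfl zero_le_one le_rfl le_rfl
      rw [hysrec, hxs0, hys0, hg]
      exact ⟨⟨this.1, this.2.1⟩, this.2.1⟩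
    simp only [hxs0, hys0]
    exact ⟨⟨⟨zero_le_one, le_rfl⟩, ⟨zero_le_one, le_rfl⟩, ⟨zero_le_one, le_rfl⟩,
      ⟨zero_le_one, le_rfl⟩⟩, ⟨(hx1 ε hε0 hε1).1.2, (hy1 ε hε0 hε1).1.2⟩, ⟨le_rfl, le_rfl⟩⟩
  | succ l ih =>
    obtain ⟨⟨⟨hxl0, hxl1⟩, ⟨hyl0, hyl1⟩, ⟨hxl'0, hxl'1⟩, ⟨hyl'0, hyl'1⟩⟩,
      ⟨hxdec, hydec⟩, ⟨hxmono, hymono⟩⟩ := ih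
    -- bounds at step l+1 for ε and ε'
    have hfb := key L1 R1 B2 R2 hL1c hR1c hB2c hR2c hL1one hR1one hB2one hR2one
      ε ε (xs ε l) (xs ε l) (ys ε l) (ys ε l) hε0 le_rfl hε1 hxl0 le_rfl hxl1 hyl0 le_rfl hyl1
    have hgb := key B1 R1 L2 R2 hB1c hR1c hL2c hR2c hB1one hR1one hL2one hR2one
      ε ε (xs ε l) (xs ε l) (ys ε l) (ys ε l) hε0 le_rfl hε1 hxl0 le_rfl hxl1 hyl0 le_rfl hyl1
    have hfb' := key L1 R1 B2 R2 hL1c hR1c hB2c hR2c hL1one hR1one hB2one hR2one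
      ε' ε' (xs ε' l) (xs ε' l) (ys ε' l) (ys ε' l) hε'0 le_rfl hε'1 hxl'0 le_rfl hxl'1
      hyl'0 le_rfl hyl'1
    have hgb' := key B1 R1 L2 R2 hB1c hR1c hL2c hR2c hB1one hR1one hL2one hR2one
      ε' ε' (xs ε' l) (xs ε' l) (ys ε' l) (ys ε' l) hε'0 le_rfl hε'1 hxl'0 le_rfl hxl'1
      hyl'0 le_rfl hyl'1
    have exs : xs ε (l+1) = ε * L1.eval (1 - R1.eval (1 - xs ε l)) *
        B2.eval (1 - R2.eval (1 - ys ε l)) := by rw [hxsrec, hf]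
    have eys : ys ε (l+1) = ε * B1.eval (1 - R1.eval (1 - xs ε l)) *
        L2.eval (1 - R2.eval (1 - ys ε l)) := by rw [hysrec, hg]
    have exs' : xs ε' (l+1) = ε' * L1.eval (1 - R1.eval (1 - xs ε' l)) *
        B2.eval (1 - R2.eval (1 - ys ε' l)) := by rw [hxsrec, hf]
    have eys' : ys ε' (l+1) = ε' * B1.eval (1 - R1.eval (1 - xs ε' l)) *
        L2.eval (1 - R2.eval (1 - ys ε' l)) := by rw [hysrec, hg]
    have hx10 : 0 ≤ xs ε (l+1) := exs ▸ hfb.1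
    have hx11 : xs ε (l+1) ≤ 1 := exs ▸ hfb.2.1
    have hy10 : 0 ≤ ys ε (l+1) := eys ▸ hgb.1
    have hy11 : ys ε (l+1) ≤ 1 := eys ▸ hgb.2.1
    have hx1'0 : 0 ≤ xs ε' (l+1) := exs' ▸ hfb'.1
    have hx1'1 : xs ε' (l+1) ≤ 1 := exs' ▸ hfb'.2.1
    have hy1'0 : 0 ≤ ys ε' (l+1) := eys' ▸ hgb'.1
    have hy1'1 : ys ε' (l+1) ≤ 1 := eys' ▸ hgb'.2.1
    refine ⟨⟨⟨hx10, hx11⟩, ⟨hy10, hy11⟩, ⟨hx1'0, hx1'1⟩, ⟨hy1'0, hy1'1⟩⟩, ⟨?_, ?_⟩, ?_, ?_⟩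
    · -- xs ε (l+2) ≤ xs ε (l+1)
      rw [hxsrec ε (l+1), hf]
      exact le_trans (key L1 R1 B2 R2 hL1c hR1c hB2c hR2c hL1one hR1one hB2one hR2one
        ε ε (xs ε (l+1)) (xs ε l) (ys ε (l+1)) (ys ε l) hε0 le_rfl hε1
        hx10 hxdec hxl1 hy10 hydec hyl1).2.2 exs.ge
    · rw [hysrec ε (l+1), hg]
      exact le_trans (key B1 R1 L2 R2 hB1c hR1c hL2c hR2c hB1one hR1one hL2one hR2one
        ε ε (xs ε (l+1)) (xs ε l) (ys ε (l+1)) (ys ε l) hε0 le_rfl hε1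
        hx10 hxdec hxl1 hy10 hydec hyl1).2.2 eys.ge
    · rw [exs, exs']
      exact (key L1 R1 B2 R2 hL1c hR1c hB2c hR2c hL1one hR1one hB2one hR2one
        ε ε' (xs ε l) (xs ε' l) (ys ε l) (ys ε' l) hε0 hεε' hε'1
        hxl0 hxmono hxl'1 hyl0 hymono hyl'1).2.2
    · rw [eys, eys']
      exact (key B1 R1 L2 R2 hB1c hR1c hL2c hR2c hB1one hR1one hL2one hR2one
        ε ε' (xs ε l) (xs ε' l) (ys ε l) (ys ε' l) hε0 hεε' hε'1
        hxl0 hxmono hxl'1 hyl0 hymono hyl'1).2.2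
end

section
/- Let ε ∈ (0,1) and let (x,y) be an (f,g)-fixed point for ε with y > 0. Then x > 0, q1(x) = q2(y), and q2(y) ≤ 1. -/
open Polynomial Set


private lemma eval_nn (P : Polynomial ℝ) (h : ∀ i, 0 ≤ P.coeff i) {t : ℝ} (ht : 0 ≤ t) :
    0 ≤ P.eval t := by
  rw [Polynomial.eval_eq_sum_range]
  exact Finset.sum_nonneg fun i _ => mul_nonneg (h i) (pow_nonneg ht i)

private lemma eval_mono (P : Polynomial ℝ) (h : ∀ i, 0 ≤ P.coeff i) {a b : ℝ}
    (ha : 0 ≤ a) (hab : a ≤ b) : P.eval a ≤ P.eval b := by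
  rw [Polynomial.eval_eq_sum_range, Polynomial.eval_eq_sum_range]
  exact Finset.sum_le_sum fun i _ =>
    mul_le_mul_of_nonneg_left (pow_le_pow_left₀ ha hab i) (h i)

/-- Lemma 8 (fixed-curve lemma ingredients): an `(f,g)`-fixed point with `y > 0`
satisfies `x > 0`, `q1(x) = q2(y)`, and `q2(y) ≤ 1`. -/
theorem stmt_7
    (L1 R1 L2 R2 B1 B2 : Polynomial ℝ)
    (hL1c : ∀ i, 0 ≤ L1.coeff i) (hR1c : ∀ i, 0 ≤ R1.coeff i)
    (hL2c : ∀ i, 0 ≤ L2.coeff i) (hR2c : ∀ i, 0 ≤ R2.coeff i)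
    (hB1c : ∀ i, 0 ≤ B1.coeff i) (hB2c : ∀ i, 0 ≤ B2.coeff i)
    (hL1one : L1.eval 1 = 1) (hR1one : R1.eval 1 = 1)
    (hL2one : L2.eval 1 = 1) (hR2one : R2.eval 1 = 1)
    (hB1one : B1.eval 1 = 1) (hB2one : B2.eval 1 = 1)
    (hL1zero : L1.eval 0 = 0) (hB10 : B1.coeff 0 = 0) (hB11 : B1.coeff 1 = 0)
    (hR1nc : ¬ (∀ u : ℝ, R1.eval u = 1))
    (f g : ℝ → ℝ → ℝ → ℝ)
    (hf : ∀ ε x y, f ε x y = ε * L1.eval (1 - R1.eval (1 - x)) * B2.eval (1 - R2.eval (1 - y)))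
    (hg : ∀ ε x y, g ε x y = ε * B1.eval (1 - R1.eval (1 - x)) * L2.eval (1 - R2.eval (1 - y)))
    (q1 q2 : ℝ → ℝ)
    (hq1 : ∀ x, q1 x = x * B1.eval (1 - R1.eval (1 - x)) / L1.eval (1 - R1.eval (1 - x)))
    (hq2 : ∀ y, q2 y = y * B2.eval (1 - R2.eval (1 - y)) / L2.eval (1 - R2.eval (1 - y)))
    (ε x y : ℝ) (hε : ε ∈ Ioo (0:ℝ) 1)
    (hx : x ∈ Icc (0:ℝ) 1) (hy : y ∈ Icc (0:ℝ) 1) (hypos : 0 < y)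
    (hfix : x = f ε x y ∧ y = g ε x y) :
    0 < x ∧ q1 x = q2 y ∧ q2 y ≤ 1 := by

  obtain ⟨hε0, hε1⟩ := hε
  obtain ⟨hx0, hx1⟩ := hx
  obtain ⟨hy0, hy1⟩ := hy
  obtain ⟨hfx, hfy⟩ := hfix
  rw [hf] at hfx
  rw [hg] at hfy
  set u : ℝ := 1 - R1.eval (1 - x) with hu
  set v : ℝ := 1 - R2.eval (1 - y) with hv
  have hu1 : u ≤ 1 := by
    have := eval_nn R1 hR1c (t := 1 - x) (by linarith)
    simp only [hu]; linarith
  have hu0 : 0 ≤ u := by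
    have := eval_mono R1 hR1c (a := 1 - x) (b := 1) (by linarith) (by linarith)
    rw [hR1one] at this; simp only [hu]; linarith
  have hv1 : v ≤ 1 := by
    have := eval_nn R2 hR2c (t := 1 - y) (by linarith)
    simp only [hv]; linarith
  have hv0 : 0 ≤ v := by
    have := eval_mono R2 hR2c (a := 1 - y) (b := 1) (by linarith) (by linarith)
    rw [hR2one] at this; simp only [hv]; linarith
  have hB1nn : 0 ≤ B1.eval u := eval_nn B1 hB1c hu0
  have hL2nn : 0 ≤ L2.eval v := eval_nn L2 hL2c hv0
  have hL1nn : 0 ≤ L1.eval u := eval_nn L1 hL1c hu0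
  have hB2nn : 0 ≤ B2.eval v := eval_nn B2 hB2c hv0
  have hB1pos : 0 < B1.eval u := by
    rcases hB1nn.lt_or_eq with h | h
    · exact h
    · rw [← h] at hfy; simp at hfy; linarith
  have hL2pos : 0 < L2.eval v := by
    rcases hL2nn.lt_or_eq with h | h
    · exact h
    · rw [← h] at hfy; simp at hfy; linarith
  have hxpos : 0 < x := by
    rcases hx0.lt_or_eq with h | h
    · exact h
    · exfalso
      have hu0' : u = 0 := by simp only [hu, ← h]; rw [show (1:ℝ) - 0 = 1 by ring, hR1one]; ring
      have : B1.eval 0 = 0 := by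
        rw [← Polynomial.coeff_zero_eq_eval_zero]; exact hB10
      rw [hu0'] at hB1pos; linarith
  have hL1pos : 0 < L1.eval u := by
    rcases hL1nn.lt_or_eq with h | h
    · exact h
    · rw [← h] at hfx; simp at hfx; linarith
  have hB2pos : 0 < B2.eval v := by
    rcases hB2nn.lt_or_eq with h | h
    · exact h
    · rw [← h] at hfx; simp at hfx; linarith
  have hq1val : q1 x = ε * B1.eval u * B2.eval v := by
    rw [hq1, div_eq_iff hL1pos.ne']
    linear_combination B1.eval u * hfx
  have hq2val : q2 y = ε * B1.eval u * B2.eval v := by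
    rw [hq2, div_eq_iff hL2pos.ne']
    linear_combination B2.eval v * hfy
  refine ⟨hxpos, by rw [hq1val, hq2val], ?_⟩
  rw [hq2val]
  have hB1le : B1.eval u ≤ 1 := by
    have := eval_mono B1 hB1c hu0 hu1; rwa [hB1one] at this
  have hB2le : B2.eval v ≤ 1 := by
    have := eval_mono B2 hB2c hv0 hv1; rwa [hB2one] at this
  calc ε * B1.eval u * B2.eval v ≤ 1 * 1 * 1 := by
        gcongr <;> linarith
    _ = 1 := by ring
end

section
/- Under the hypotheses of Construction 1 — namely ε1 := inf{ x / λ1(1−ρ1(1−x)) : x ∈ (0,1] } satisfies 0 < ε1 < ε2 < 1, the layer-2 threshold satisfies inf{ y / λ2(1−ρ2(1−y)) : y ∈ (0,1] } = ε2·a_s, and P0 = ε1/ε2, where x_s := sup{ x ∈ [0,1] : ε2·λ1(1−ρ1(1−x)) ≥ x } and a_s := Λ1(1−ρ1(1−x_s)) — the decoding threshold of the bilayer ensemble equals ε2: ε2* = ε2. -/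
open Polynomial Set Filter

lemma poly_nonneg {P : Polynomial ℝ} (h : ∀ i, 0 ≤ P.coeff i) {a : ℝ} (ha : 0 ≤ a) :
    0 ≤ P.eval a := by
  rw [Polynomial.eval_eq_sum_range]
  exact Finset.sum_nonneg fun i _ => mul_nonneg (h i) (pow_nonneg ha i)

lemma poly_mono {P : Polynomial ℝ} (h : ∀ i, 0 ≤ P.coeff i) {a b : ℝ} (ha : 0 ≤ a)
    (hab : a ≤ b) : P.eval a ≤ P.eval b := by
  rw [Polynomial.eval_eq_sum_range, Polynomial.eval_eq_sum_range]
  exact Finset.sum_le_sum fun i _ => mul_le_mul_of_nonneg_left (pow_le_pow_left₀ ha hab i) (h i)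

lemma arg_mem {R : Polynomial ℝ} (hc : ∀ i, 0 ≤ R.coeff i) (h1 : R.eval 1 = 1) {x : ℝ}
    (hx : x ∈ Icc (0:ℝ) 1) : 1 - R.eval (1 - x) ∈ Icc (0:ℝ) 1 := by
  constructor
  · have h := poly_mono hc (by linarith [hx.2] : (0:ℝ) ≤ 1 - x) (by linarith [hx.1] : 1 - x ≤ 1)
    rw [h1] at h; linarith
  · have h := poly_nonneg hc (by linarith [hx.2] : (0:ℝ) ≤ 1 - x)
    linarith

lemma arg_mono {R : Polynomial ℝ} (hc : ∀ i, 0 ≤ R.coeff i) {x y : ℝ}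
    (hx : 0 ≤ x) (hxy : x ≤ y) (hy : y ≤ 1) : 1 - R.eval (1 - x) ≤ 1 - R.eval (1 - y) := by
  have h := poly_mono hc (by linarith : (0:ℝ) ≤ 1 - y) (by linarith : 1 - y ≤ 1 - x)
  linarith

lemma comp_mem {L R : Polynomial ℝ} (hLc : ∀ i, 0 ≤ L.coeff i) (hL1 : L.eval 1 = 1)
    (hRc : ∀ i, 0 ≤ R.coeff i) (hR1 : R.eval 1 = 1) {x : ℝ} (hx : x ∈ Icc (0:ℝ) 1) :
    L.eval (1 - R.eval (1 - x)) ∈ Icc (0:ℝ) 1 := by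
  have h := arg_mem hRc hR1 hx
  refine ⟨poly_nonneg hLc h.1, ?_⟩
  have h2 := poly_mono hLc h.1 h.2
  rwa [hL1] at h2

lemma comp_mono_s11 {L R : Polynomial ℝ} (hLc : ∀ i, 0 ≤ L.coeff i) (hRc : ∀ i, 0 ≤ R.coeff i)
    (hR1 : R.eval 1 = 1) {x y : ℝ} (hx : 0 ≤ x) (hxy : x ≤ y) (hy : y ≤ 1) :
    L.eval (1 - R.eval (1 - x)) ≤ L.eval (1 - R.eval (1 - y)) :=
  poly_mono hLc (arg_mem hRc hR1 ⟨hx, le_trans hxy hy⟩).1 (arg_mono hRc hx hxy hy)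

lemma mul3_le_one {e A B : ℝ} (he0 : 0 ≤ e) (he1 : e ≤ 1) (hA0 : 0 ≤ A) (hA1 : A ≤ 1)
    (hB0 : 0 ≤ B) (hB1 : B ≤ 1) : e * A * B ≤ 1 := by
  have h1 : e * A ≤ 1 * 1 := mul_le_mul he1 hA1 hA0 zero_le_one
  have h2 : e * A * B ≤ 1 * 1 := mul_le_mul (by linarith) hB1 hB0 zero_le_one
  linarith

/-- Theorem 3: a bilayer ensemble produced by Construction 1 has decoding threshold `ε2`. -/
theorem stmt_11
    (L1 R1 L2 R2 B1 B2 : Polynomial ℝ)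
    (hL1c : ∀ i, 0 ≤ L1.coeff i) (hR1c : ∀ i, 0 ≤ R1.coeff i)
    (hL2c : ∀ i, 0 ≤ L2.coeff i) (hR2c : ∀ i, 0 ≤ R2.coeff i)
    (hB1c : ∀ i, 0 ≤ B1.coeff i) (hB2c : ∀ i, 0 ≤ B2.coeff i)
    (hL1one : L1.eval 1 = 1) (hR1one : R1.eval 1 = 1)
    (hL2one : L2.eval 1 = 1) (hR2one : R2.eval 1 = 1)
    (hB1one : B1.eval 1 = 1) (hB2one : B2.eval 1 = 1)
    (hL1zero : L1.eval 0 = 0) (hB10 : B1.coeff 0 = 0) (hB11 : B1.coeff 1 = 0)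
    (f g : ℝ → ℝ → ℝ → ℝ)
    (hf : ∀ ε x y, f ε x y = ε * L1.eval (1 - R1.eval (1 - x)) * B2.eval (1 - R2.eval (1 - y)))
    (hg : ∀ ε x y, g ε x y = ε * B1.eval (1 - R1.eval (1 - x)) * L2.eval (1 - R2.eval (1 - y)))
    (xs ys : ℝ → ℕ → ℝ)
    (hxs0 : ∀ e, xs e 0 = 1) (hys0 : ∀ e, ys e 0 = 1)
    (hxsrec : ∀ e l, xs e (l + 1) = f e (xs e l) (ys e l))
    (hysrec : ∀ e l, ys e (l + 1) = g e (xs e l) (ys e l))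
    (ε1 ε2 xstuck astuck : ℝ)
    (hε1 : ε1 = sInf ((fun x => x / L1.eval (1 - R1.eval (1 - x))) '' Ioc (0:ℝ) 1))
    (hε1pos : 0 < ε1) (hε12 : ε1 < ε2) (hε2lt : ε2 < 1)
    (hxstuck : xstuck = sSup {x : ℝ | x ∈ Icc (0:ℝ) 1 ∧ x ≤ ε2 * L1.eval (1 - R1.eval (1 - x))})
    (hastuck : astuck = B1.eval (1 - R1.eval (1 - xstuck)))
    (hlayer2 : sInf ((fun y => y / L2.eval (1 - R2.eval (1 - y))) '' Ioc (0:ℝ) 1) = ε2 * astuck)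
    (hP0 : B2.eval 0 = ε1 / ε2) :
    sSup {e : ℝ | e ∈ Icc (0:ℝ) 1 ∧ Tendsto (fun l => xs e l) atTop (nhds 0)} = ε2 := by
  have hε2pos : 0 < ε2 := lt_trans hε1pos hε12
  -- sequences stay in [0,1]
  have hmem : ∀ e, e ∈ Icc (0:ℝ) 1 → ∀ l, xs e l ∈ Icc (0:ℝ) 1 ∧ ys e l ∈ Icc (0:ℝ) 1 := by
    intro e he l
    induction l with
    | zero =>
      rw [hxs0, hys0]
      exact ⟨⟨zero_le_one, le_refl 1⟩, ⟨zero_le_one, le_refl 1⟩⟩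
    | succ l ih =>
      rw [hxsrec, hysrec, hf, hg]
      have h1 := comp_mem hL1c hL1one hR1c hR1one ih.1
      have h2 := comp_mem hB2c hB2one hR2c hR2one ih.2
      have h3 := comp_mem hB1c hB1one hR1c hR1one ih.1
      have h4 := comp_mem hL2c hL2one hR2c hR2one ih.2
      refine ⟨⟨mul_nonneg (mul_nonneg he.1 h1.1) h2.1, ?_⟩,
        ⟨mul_nonneg (mul_nonneg he.1 h3.1) h4.1, ?_⟩⟩
      · exact mul3_le_one he.1 he.2 h1.1 h1.2 h2.1 h2.2
      · exact mul3_le_one he.1 he.2 h3.1 h3.2 h4.1 h4.2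
  -- sequences are antitone
  have hanti : ∀ e, e ∈ Icc (0:ℝ) 1 → ∀ l, xs e (l+1) ≤ xs e l ∧ ys e (l+1) ≤ ys e l := by
    intro e he l
    induction l with
    | zero =>
      constructor
      · rw [hxs0]; exact (hmem e he 1).1.2
      · rw [hys0]; exact (hmem e he 1).2.2
    | succ l ih =>
      have hm := hmem e he l
      have hm1 := hmem e he (l+1)
      have hA := comp_mono_s11 hL1c hR1c hR1one hm1.1.1 ih.1 hm.1.2
      have hB := comp_mono_s11 hB2c hR2c hR2one hm1.2.1 ih.2 hm.2.2
      have hA' := comp_mono_s11 hB1c hR1c hR1one hm1.1.1 ih.1 hm.1.2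
      have hB' := comp_mono_s11 hL2c hR2c hR2one hm1.2.1 ih.2 hm.2.2
      have hA0 := (comp_mem hL1c hL1one hR1c hR1one hm1.1).1
      have hB0 := (comp_mem hB2c hB2one hR2c hR2one hm1.2).1
      have hA0' := (comp_mem hB1c hB1one hR1c hR1one hm1.1).1
      have hB0' := (comp_mem hL2c hL2one hR2c hR2one hm1.2).1
      have hfstep : f e (xs e (l+1)) (ys e (l+1)) ≤ f e (xs e l) (ys e l) := by
        rw [hf, hf]
        have h := mul_le_mul hA hB hB0 (hA0.trans hA)
        rw [mul_assoc, mul_assoc]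
        exact mul_le_mul_of_nonneg_left h he.1
      have hgstep : g e (xs e (l+1)) (ys e (l+1)) ≤ g e (xs e l) (ys e l) := by
        rw [hg, hg]
        have h := mul_le_mul hA' hB' hB0' (hA0'.trans hA')
        rw [mul_assoc, mul_assoc]
        exact mul_le_mul_of_nonneg_left h he.1
      constructor
      · calc xs e (l+1+1) = f e (xs e (l+1)) (ys e (l+1)) := hxsrec e (l+1)
          _ ≤ f e (xs e l) (ys e l) := hfstep
          _ = xs e (l+1) := (hxsrec e l).symm
      · calc ys e (l+1+1) = g e (xs e (l+1)) (ys e (l+1)) := hysrec e (l+1)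
          _ ≤ g e (xs e l) (ys e l) := hgstep
          _ = ys e (l+1) := (hysrec e l).symm
  -- convergence to a fixed point
  have hconv : ∀ e, e ∈ Icc (0:ℝ) 1 →
      ∃ a b : ℝ, a ∈ Icc (0:ℝ) 1 ∧ b ∈ Icc (0:ℝ) 1 ∧
        Tendsto (fun l => xs e l) atTop (nhds a) ∧ Tendsto (fun l => ys e l) atTop (nhds b) ∧
        a = f e a b ∧ b = g e a b := by
    intro e he
    have hxa : Antitone (fun l => xs e l) := antitone_nat_of_succ_le fun l => (hanti e he l).1
    have hya : Antitone (fun l => ys e l) := antitone_nat_of_succ_le fun l => (hanti e he l).2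
    have hxb : BddBelow (Set.range fun l => xs e l) := by
      refine ⟨0, ?_⟩; rintro v ⟨l, rfl⟩; exact (hmem e he l).1.1
    have hyb : BddBelow (Set.range fun l => ys e l) := by
      refine ⟨0, ?_⟩; rintro v ⟨l, rfl⟩; exact (hmem e he l).2.1
    set a := ⨅ l, xs e l with ha
    set b := ⨅ l, ys e l with hb
    have hta : Tendsto (fun l => xs e l) atTop (nhds a) := tendsto_atTop_ciInf hxa hxb
    have htb : Tendsto (fun l => ys e l) atTop (nhds b) := tendsto_atTop_ciInf hya hyb
    have ha01 : a ∈ Icc (0:ℝ) 1 := by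
      constructor
      · exact le_ciInf fun l => (hmem e he l).1.1
      · exact (ciInf_le hxb 0).trans_eq (hxs0 e)
    have hb01 : b ∈ Icc (0:ℝ) 1 := by
      constructor
      · exact le_ciInf fun l => (hmem e he l).2.1
      · exact (ciInf_le hyb 0).trans_eq (hys0 e)
    have targ1 : Tendsto (fun l => 1 - R1.eval (1 - xs e l)) atTop
        (nhds (1 - R1.eval (1 - a))) :=
      tendsto_const_nhds.sub ((R1.continuous.tendsto _).comp (tendsto_const_nhds.sub hta))
    have targ2 : Tendsto (fun l => 1 - R2.eval (1 - ys e l)) atTop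
        (nhds (1 - R2.eval (1 - b))) :=
      tendsto_const_nhds.sub ((R2.continuous.tendsto _).comp (tendsto_const_nhds.sub htb))
    have tL1 : Tendsto (fun l => L1.eval (1 - R1.eval (1 - xs e l))) atTop
        (nhds (L1.eval (1 - R1.eval (1 - a)))) := (L1.continuous.tendsto _).comp targ1
    have tB1 : Tendsto (fun l => B1.eval (1 - R1.eval (1 - xs e l))) atTop
        (nhds (B1.eval (1 - R1.eval (1 - a)))) := (B1.continuous.tendsto _).comp targ1
    have tL2 : Tendsto (fun l => L2.eval (1 - R2.eval (1 - ys e l))) atTop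
        (nhds (L2.eval (1 - R2.eval (1 - b)))) := (L2.continuous.tendsto _).comp targ2
    have tB2 : Tendsto (fun l => B2.eval (1 - R2.eval (1 - ys e l))) atTop
        (nhds (B2.eval (1 - R2.eval (1 - b)))) := (B2.continuous.tendsto _).comp targ2
    have hft : Tendsto (fun l => f e (xs e l) (ys e l)) atTop (nhds (f e a b)) := by
      simp only [hf]
      exact (tendsto_const_nhds.mul tL1).mul tB2
    have hgt : Tendsto (fun l => g e (xs e l) (ys e l)) atTop (nhds (g e a b)) := by
      simp only [hg]
      exact (tendsto_const_nhds.mul tB1).mul tL2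
    have hsx : Tendsto (fun l => xs e (l+1)) atTop (nhds a) := hta.comp (tendsto_add_atTop_nat 1)
    have hsy : Tendsto (fun l => ys e (l+1)) atTop (nhds b) := htb.comp (tendsto_add_atTop_nat 1)
    have hft' : Tendsto (fun l => xs e (l+1)) atTop (nhds (f e a b)) := by
      simp only [hxsrec]; exact hft
    have hgt' : Tendsto (fun l => ys e (l+1)) atTop (nhds (g e a b)) := by
      simp only [hysrec]; exact hgt
    exact ⟨a, b, ha01, hb01, hta, htb, tendsto_nhds_unique hsx hft',
      tendsto_nhds_unique hsy hgt'⟩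
  -- layer-1 threshold inequality
  have key1 : ∀ x, x ∈ Ioc (0:ℝ) 1 → ε1 ≤ x / L1.eval (1 - R1.eval (1 - x)) := by
    intro x hx
    have hb : BddBelow ((fun x => x / L1.eval (1 - R1.eval (1 - x))) '' Ioc (0:ℝ) 1) := by
      refine ⟨0, ?_⟩; rintro v ⟨z, hz, rfl⟩
      exact div_nonneg hz.1.le (poly_nonneg hL1c (arg_mem hR1c hR1one ⟨hz.1.le, hz.2⟩).1)
    have h := csInf_le hb ⟨x, hx, rfl⟩
    rw [← hε1] at h
    exact h
  have key1' : ∀ x, x ∈ Ioc (0:ℝ) 1 → ε1 * L1.eval (1 - R1.eval (1 - x)) ≤ x := by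
    intro x hx
    have h := key1 x hx
    have hL0 : 0 ≤ L1.eval (1 - R1.eval (1 - x)) :=
      poly_nonneg hL1c (arg_mem hR1c hR1one ⟨hx.1.le, hx.2⟩).1
    rcases hL0.lt_or_eq with h0 | h0
    · exact (le_div_iff₀ h0).mp h
    · rw [← h0, mul_zero]; exact hx.1.le
  -- layer-2 threshold inequality
  have key2 : ∀ y, y ∈ Ioc (0:ℝ) 1 → ε2 * astuck * L2.eval (1 - R2.eval (1 - y)) ≤ y := by
    intro y hy
    have hb : BddBelow ((fun y => y / L2.eval (1 - R2.eval (1 - y))) '' Ioc (0:ℝ) 1) := by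
      refine ⟨0, ?_⟩; rintro v ⟨z, hz, rfl⟩
      exact div_nonneg hz.1.le (poly_nonneg hL2c (arg_mem hR2c hR2one ⟨hz.1.le, hz.2⟩).1)
    have h := csInf_le hb ⟨y, hy, rfl⟩
    rw [hlayer2] at h
    have hL0 : 0 ≤ L2.eval (1 - R2.eval (1 - y)) :=
      poly_nonneg hL2c (arg_mem hR2c hR2one ⟨hy.1.le, hy.2⟩).1
    rcases hL0.lt_or_eq with h0 | h0
    · exact (le_div_iff₀ h0).mp h
    · rw [← h0, mul_zero]; exact hy.1.le
  -- stuck point facts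
  have hT0 : (0:ℝ) ∈ {x : ℝ | x ∈ Icc (0:ℝ) 1 ∧ x ≤ ε2 * L1.eval (1 - R1.eval (1 - x))} := by
    refine ⟨⟨le_refl 0, zero_le_one⟩, ?_⟩
    simp [hR1one, hL1zero]
  have hTbdd : BddAbove {x : ℝ | x ∈ Icc (0:ℝ) 1 ∧ x ≤ ε2 * L1.eval (1 - R1.eval (1 - x))} := by
    refine ⟨1, ?_⟩; rintro z hz; exact hz.1.2
  have hxs1 : xstuck ≤ 1 := by
    rw [hxstuck]; exact csSup_le ⟨0, hT0⟩ fun z hz => hz.1.2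
  have hxsnn : 0 ≤ xstuck := by
    rw [hxstuck]; exact le_csSup hTbdd hT0
  have hastuck0 : 0 ≤ astuck := by
    rw [hastuck]
    exact poly_nonneg hB1c (arg_mem hR1c hR1one ⟨hxsnn, hxs1⟩).1
  -- forward direction: e < ε2 implies convergence to 0
  have forward : ∀ e, 0 ≤ e → e < ε2 → Tendsto (fun l => xs e l) atTop (nhds 0) := by
    intro e he0 heε2
    have he : e ∈ Icc (0:ℝ) 1 := ⟨he0, le_of_lt (lt_trans heε2 hε2lt)⟩
    obtain ⟨a, b, ha, hb, hta, htb, hfa, hfb⟩ := hconv e he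
    rw [hf] at hfa
    rw [hg] at hfb
    have hA1mem := comp_mem hL1c hL1one hR1c hR1one ha
    have hBbmem := comp_mem hB2c hB2one hR2c hR2one hb
    have hBlmem := comp_mem hL2c hL2one hR2c hR2one hb
    -- a is below the stuck point
    have haxs : a ≤ xstuck := by
      rw [hxstuck]
      refine le_csSup hTbdd ⟨ha, ?_⟩
      have h1 : e * L1.eval (1 - R1.eval (1 - a)) * B2.eval (1 - R2.eval (1 - b)) ≤
          e * L1.eval (1 - R1.eval (1 - a)) * 1 :=
        mul_le_mul_of_nonneg_left hBbmem.2 (mul_nonneg he0 hA1mem.1)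
      have h2 : e * L1.eval (1 - R1.eval (1 - a)) ≤ ε2 * L1.eval (1 - R1.eval (1 - a)) :=
        mul_le_mul_of_nonneg_right heε2.le hA1mem.1
      linarith [hfa.le]
    have hA2le : B1.eval (1 - R1.eval (1 - a)) ≤ astuck := by
      rw [hastuck]
      exact comp_mono_s11 hB1c hR1c hR1one ha.1 haxs hxs1
    -- b = 0
    have hb0 : b = 0 := by
      by_contra hbne
      have hbpos : 0 < b := lt_of_le_of_ne hb.1 (Ne.symm hbne)
      have hk := key2 b ⟨hbpos, hb.2⟩
      have hA2nn := (comp_mem hB1c hB1one hR1c hR1one ha).1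
      have hble : b ≤ e * astuck * L2.eval (1 - R2.eval (1 - b)) :=
        hfb.trans_le (mul_le_mul_of_nonneg_right (mul_le_mul_of_nonneg_left hA2le he0) hBlmem.1)
      have hp : 0 < astuck * L2.eval (1 - R2.eval (1 - b)) := by
        nlinarith [mul_le_mul_of_nonneg_right he.2 (mul_nonneg hastuck0 hBlmem.1)]
      nlinarith [mul_lt_mul_of_pos_right heε2 hp]
    subst hb0
    rw [sub_zero, hR2one, sub_self, hP0] at hfa
    -- a = 0
    have ha0 : a = 0 := by
      by_contra hane
      have hapos : 0 < a := lt_of_le_of_ne ha.1 (Ne.symm hane)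
      have hk := key1' a ⟨hapos, ha.2⟩
      have hA1pos : 0 < L1.eval (1 - R1.eval (1 - a)) := by
        rcases hA1mem.1.lt_or_eq with h | h
        · exact h
        · exfalso; rw [← h] at hfa; simp at hfa; linarith
      have hε2ne : ε2 ≠ 0 := hε2pos.ne'
      have heq : ε2 * a = e * (ε1 * L1.eval (1 - R1.eval (1 - a))) := by
        have h := congrArg (fun t => ε2 * t) hfa
        rw [h]; field_simp
      have hlt : e * (ε1 * L1.eval (1 - R1.eval (1 - a))) < ε2 * (ε1 * L1.eval (1 - R1.eval (1 - a))) :=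
        mul_lt_mul_of_pos_right heε2 (mul_pos hε1pos hA1pos)
      have hle : ε2 * (ε1 * L1.eval (1 - R1.eval (1 - a))) ≤ ε2 * a :=
        mul_le_mul_of_nonneg_left hk hε2pos.le
      linarith
    rw [ha0] at hta
    exact hta
  -- converse: convergence implies e ≤ ε2
  have converse : ∀ e, e ∈ Icc (0:ℝ) 1 → Tendsto (fun l => xs e l) atTop (nhds 0) → e ≤ ε2 := by
    intro e he ht
    by_contra hgt
    push_neg at hgt
    have hne : ((fun x => x / L1.eval (1 - R1.eval (1 - x))) '' Ioc (0:ℝ) 1).Nonempty :=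
      ⟨_, ⟨1, ⟨one_pos, le_refl 1⟩, rfl⟩⟩
    have hc : ε1 < e * ε1 / ε2 := by
      rw [lt_div_iff₀ hε2pos]; nlinarith
    obtain ⟨v, ⟨x0, hx0, rfl⟩, hv⟩ := exists_lt_of_csInf_lt hne (by rw [← hε1]; exact hc)
    have hH0 : 0 ≤ L1.eval (1 - R1.eval (1 - x0)) :=
      poly_nonneg hL1c (arg_mem hR1c hR1one ⟨hx0.1.le, hx0.2⟩).1
    have hHpos : 0 < L1.eval (1 - R1.eval (1 - x0)) := by
      rcases hH0.lt_or_eq with h | h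
      · exact h
      · exfalso
        have hk := key1 x0 hx0
        rw [← h, div_zero] at hk
        linarith
    have hx0lt : x0 < e * ε1 / ε2 * L1.eval (1 - R1.eval (1 - x0)) :=
      (div_lt_iff₀ hHpos).mp hv
    have hlb : ∀ l, x0 ≤ xs e l := by
      intro l
      induction l with
      | zero => rw [hxs0]; exact hx0.2
      | succ l ih =>
        rw [hxsrec, hf]
        have hm := hmem e he l
        have h1 : L1.eval (1 - R1.eval (1 - x0)) ≤ L1.eval (1 - R1.eval (1 - xs e l)) :=
          comp_mono_s11 hL1c hR1c hR1one hx0.1.le ih hm.1.2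
        have h2 : ε1 / ε2 ≤ B2.eval (1 - R2.eval (1 - ys e l)) := by
          rw [← hP0]
          exact poly_mono hB2c le_rfl (arg_mem hR2c hR2one hm.2).1
        have hL1nn : 0 ≤ L1.eval (1 - R1.eval (1 - xs e l)) := hH0.trans h1
        have h3 : e * L1.eval (1 - R1.eval (1 - x0)) * (ε1 / ε2) ≤
            e * L1.eval (1 - R1.eval (1 - xs e l)) * B2.eval (1 - R2.eval (1 - ys e l)) :=
          mul_le_mul (mul_le_mul_of_nonneg_left h1 he.1) h2
            (div_nonneg hε1pos.le hε2pos.le) (mul_nonneg he.1 hL1nn)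
        have heq : e * ε1 / ε2 * L1.eval (1 - R1.eval (1 - x0)) =
            e * L1.eval (1 - R1.eval (1 - x0)) * (ε1 / ε2) := by ring
        linarith
    have hfin : x0 ≤ 0 := ge_of_tendsto' ht hlb
    linarith [hx0.1]
  -- conclude
  apply csSup_eq_of_forall_le_of_forall_lt_exists_gt
  · exact ⟨0, ⟨le_refl 0, zero_le_one⟩, forward 0 le_rfl hε2pos⟩
  · rintro e ⟨he, ht⟩
    exact converse e he ht
  · intro w hw
    rcases le_or_gt 0 w with h | h
    · exact ⟨(w + ε2)/2, ⟨⟨by linarith, by linarith⟩,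
        forward _ (by linarith) (by linarith)⟩, by linarith⟩
    · exact ⟨0, ⟨⟨le_refl 0, zero_le_one⟩, forward 0 le_rfl hε2pos⟩, h⟩
end

section
/- Let L ≥ 1 and let 0 < ε_1 < ε_2 < ⋯ < ε_L < 1, let a_1, …, a_{L−1} ∈ [0,1], and let r_1, …, r_L be real numbers. Define θ_1 := ε_1 and θ_i := ε_i·a_{i−1} for 2 ≤ i ≤ L; define the layer gaps δ_i := r_i − θ_i; define P^{(1)} := 0 and P^{(i)} := ε_{i−1}/ε_i for 2 ≤ i ≤ L; and define the multi-layer gap δ := Σ_{i=1}^{L} r_i·(1 − P^{(i)}) − ε_L. Then δ ≤ Σ_{i=1}^{L} δ_i·(1 − P^{(i)}). -/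
open Finset

/-- Lemma 6: the multi-layer gap to capacity is at most `Σ δ_i·(1 − P⁽ⁱ⁾)`. -/
theorem stmt_13
    (L : ℕ) (hL : 1 ≤ L)
    (eps a r θ P : ℕ → ℝ)
    (heps1 : 0 < eps 1)
    (hepsmono : ∀ i, 1 ≤ i → i < L → eps i < eps (i + 1))
    (hepsL : eps L < 1)
    (ha : ∀ i, 1 ≤ i → i ≤ L - 1 → a i ∈ Set.Icc (0:ℝ) 1)
    (hθ1 : θ 1 = eps 1)
    (hθi : ∀ i, 2 ≤ i → i ≤ L → θ i = eps i * a (i - 1))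
    (hP1 : P 1 = 0)
    (hPi : ∀ i, 2 ≤ i → i ≤ L → P i = eps (i - 1) / eps i)
    (δ : ℝ)
    (hδ : δ = (∑ i ∈ Finset.Icc 1 L, r i * (1 - P i)) - eps L) :
    δ ≤ ∑ i ∈ Finset.Icc 1 L, (r i - θ i) * (1 - P i) := by
  -- positivity of eps on [1, L]
  have hpos : ∀ i, 1 ≤ i → i ≤ L → 0 < eps i := by
    intro i hi1 hiL
    induction i with
    | zero => omega
    | succ n ih =>
      rcases Nat.eq_or_lt_of_le hi1 with h | h
      · simpa [← h] using heps1
      · have hn1 : 1 ≤ n := by omega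
        have hnL : n < L := by omega
        exact lt_trans (ih hn1 (le_of_lt hnL)) (hepsmono n hn1 hnL)
  -- key bound: partial sums of θ·(1-P) are ≤ eps n
  have key : ∀ n, 1 ≤ n → n ≤ L → ∑ i ∈ Finset.Icc 1 n, θ i * (1 - P i) ≤ eps n := by
    intro n hn1
    induction n with
    | zero => omega
    | succ m ih =>
      intro hmL
      rcases Nat.eq_or_lt_of_le hn1 with h | h
      · simp [← h, hθ1, hP1]
      · have hm1 : 1 ≤ m := by omega
        have hmL' : m ≤ L := by omega
        have hsum : ∑ i ∈ Finset.Icc 1 (m + 1), θ i * (1 - P i)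
            = (∑ i ∈ Finset.Icc 1 m, θ i * (1 - P i)) + θ (m + 1) * (1 - P (m + 1)) := by
          rw [Finset.sum_Icc_succ_top (by omega : 1 ≤ m + 1)]
        have hθm : θ (m + 1) = eps (m + 1) * a m := by
          simpa using hθi (m + 1) (by omega) hmL
        have hPm : P (m + 1) = eps m / eps (m + 1) := by
          simpa using hPi (m + 1) (by omega) hmL
        have hem : 0 < eps m := hpos m hm1 hmL'
        have hem1 : 0 < eps (m + 1) := hpos (m + 1) (by omega) hmL
        have hmono := hepsmono m hm1 (by omega)
        have haI := ha m hm1 (by omega)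
        obtain ⟨ha0, ha1⟩ := haI
        have hfrac : 0 ≤ 1 - eps m / eps (m + 1) := by
          have : eps m / eps (m + 1) ≤ 1 := by
            rw [div_le_one hem1]; linarith
          linarith
        have hterm : θ (m + 1) * (1 - P (m + 1)) ≤ eps (m + 1) - eps m := by
          rw [hθm, hPm]
          have h1 : eps (m + 1) * a m * (1 - eps m / eps (m + 1))
              ≤ eps (m + 1) * 1 * (1 - eps m / eps (m + 1)) := by
            apply mul_le_mul_of_nonneg_right _ hfrac
            exact mul_le_mul_of_nonneg_left ha1 (le_of_lt hem1)
          have h2 : eps (m + 1) * 1 * (1 - eps m / eps (m + 1)) = eps (m + 1) - eps m := by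
            field_simp
          linarith
        have := ih hm1 hmL'
        linarith [hsum]
  have hkey := key L hL le_rfl
  have hsplit : ∑ i ∈ Finset.Icc 1 L, r i * (1 - P i)
      = (∑ i ∈ Finset.Icc 1 L, (r i - θ i) * (1 - P i))
        + ∑ i ∈ Finset.Icc 1 L, θ i * (1 - P i) := by
    rw [← Finset.sum_add_distrib]
    apply Finset.sum_congr rfl
    intro i _
    ring
  rw [hδ, hsplit]
  linarith
end

section
/- Fix η > 0 and ε ∈ (0,1), and suppose that there is no (f,g)-fixed point (x,y) for ε with x ∈ (0,1] and y ∈ [0,1]. Let ε1 := inf{ x / λ1(1−ρ1(1−x)) : x ∈ (0,1] }, and define the scheduled sequences x_0 = y_0 = 1, x_{l+1} = f(ε, x_l, y_l) for all l ≥ 0, and for l ≥ 1: y_{l+1} = g(ε, x_l, y_l) if |x_{l−1} − x_l| ≤ η and ε·Λ2(1−ρ2(1−y_l)) ≥ ε1, and y_{l+1} = y_l otherwise (and y_1 = g(ε, x_0, y_0)). Then the scheduling scheme is valid: x_l → 0 as l → ∞. -/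
open Polynomial Set Filter

lemma ev_nonneg (P : Polynomial ℝ) (hc : ∀ i, 0 ≤ P.coeff i) {a : ℝ} (ha : 0 ≤ a) :
    0 ≤ P.eval a := by
  rw [Polynomial.eval_eq_sum_range]
  exact Finset.sum_nonneg fun i _ => mul_nonneg (hc i) (pow_nonneg ha i)

lemma ev_mono (P : Polynomial ℝ) (hc : ∀ i, 0 ≤ P.coeff i) {a b : ℝ} (ha : 0 ≤ a) (hab : a ≤ b) :
    P.eval a ≤ P.eval b := by
  rw [Polynomial.eval_eq_sum_range, Polynomial.eval_eq_sum_range]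
  exact Finset.sum_le_sum fun i _ => mul_le_mul_of_nonneg_left (pow_le_pow_left₀ ha hab i) (hc i)

noncomputable def comp2 (P Q : Polynomial ℝ) (x : ℝ) : ℝ := Q.eval (1 - P.eval (1 - x))

lemma comp2_mem (P Q : Polynomial ℝ) (hP : ∀ i, 0 ≤ P.coeff i) (hQ : ∀ i, 0 ≤ Q.coeff i)
    (hP1 : P.eval 1 = 1) (hQ1 : Q.eval 1 = 1) {x : ℝ} (hx0 : 0 ≤ x) (hx1 : x ≤ 1) :
    comp2 P Q x ∈ Icc (0:ℝ) 1 := by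
  have h1 : 0 ≤ P.eval (1 - x) := ev_nonneg P hP (by linarith)
  have h2 : P.eval (1 - x) ≤ 1 := hP1 ▸ ev_mono P hP (by linarith) (by linarith)
  refine ⟨ev_nonneg Q hQ (by linarith), ?_⟩
  calc Q.eval (1 - P.eval (1-x)) ≤ Q.eval 1 := ev_mono Q hQ (by linarith) (by linarith)
    _ = 1 := hQ1

lemma comp2_mono (P Q : Polynomial ℝ) (hP : ∀ i, 0 ≤ P.coeff i) (hQ : ∀ i, 0 ≤ Q.coeff i)
    (hP1 : P.eval 1 = 1)
    {x x' : ℝ} (hx0 : 0 ≤ x) (hx'1 : x' ≤ 1) (hxx' : x ≤ x') :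
    comp2 P Q x ≤ comp2 P Q x' := by
  have h1 : P.eval (1 - x') ≤ P.eval (1 - x) := ev_mono P hP (by linarith) (by linarith)
  have h2 : P.eval (1 - x) ≤ 1 := hP1 ▸ ev_mono P hP (by linarith) (by linarith)
  exact ev_mono Q hQ (by linarith) (by linarith)

lemma comp2_continuous (P Q : Polynomial ℝ) : Continuous (comp2 P Q) :=
  Q.continuous.comp (continuous_const.sub (P.continuous.comp (continuous_const.sub continuous_id)))

/-- Lemma 7: for every `η > 0`, the proposed scheduling scheme is valid: if the channel
parameter `ε` admits no non-trivial `(f,g)`-fixed point, then `x_l → 0`. -/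
theorem stmt_15
    (L1 R1 L2 R2 B1 B2 : Polynomial ℝ)
    (hL1c : ∀ i, 0 ≤ L1.coeff i) (hR1c : ∀ i, 0 ≤ R1.coeff i)
    (hL2c : ∀ i, 0 ≤ L2.coeff i) (hR2c : ∀ i, 0 ≤ R2.coeff i)
    (hB1c : ∀ i, 0 ≤ B1.coeff i) (hB2c : ∀ i, 0 ≤ B2.coeff i)
    (hL1one : L1.eval 1 = 1) (hR1one : R1.eval 1 = 1)
    (hL2one : L2.eval 1 = 1) (hR2one : R2.eval 1 = 1)
    (hB1one : B1.eval 1 = 1) (hB2one : B2.eval 1 = 1)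
    (hL1zero : L1.eval 0 = 0) (hB10 : B1.coeff 0 = 0) (hB11 : B1.coeff 1 = 0)
    (f g : ℝ → ℝ → ℝ → ℝ)
    (hf : ∀ ε x y, f ε x y = ε * L1.eval (1 - R1.eval (1 - x)) * B2.eval (1 - R2.eval (1 - y)))
    (hg : ∀ ε x y, g ε x y = ε * B1.eval (1 - R1.eval (1 - x)) * L2.eval (1 - R2.eval (1 - y)))
    (η : ℝ) (hη : 0 < η)
    (ε : ℝ) (hε : ε ∈ Ioo (0:ℝ) 1)
    (hnofix : ¬ ∃ x y : ℝ, x ∈ Ioc (0:ℝ) 1 ∧ y ∈ Icc (0:ℝ) 1 ∧ x = f ε x y ∧ y = g ε x y)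
    (ε1 : ℝ)
    (hε1 : ε1 = sInf ((fun x => x / L1.eval (1 - R1.eval (1 - x))) '' Ioc (0:ℝ) 1))
    (xs ys : ℕ → ℝ)
    (hxs0 : xs 0 = 1) (hys0 : ys 0 = 1)
    (hxsrec : ∀ l, xs (l + 1) = f ε (xs l) (ys l))
    (hys1 : ys 1 = g ε (xs 0) (ys 0))
    (hysrec : ∀ l, 1 ≤ l →
      ((|xs (l - 1) - xs l| ≤ η ∧ ε1 ≤ ε * B2.eval (1 - R2.eval (1 - ys l))) →
          ys (l + 1) = g ε (xs l) (ys l)) ∧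
      (¬ (|xs (l - 1) - xs l| ≤ η ∧ ε1 ≤ ε * B2.eval (1 - R2.eval (1 - ys l))) →
          ys (l + 1) = ys l)) :
    Tendsto xs atTop (nhds 0) := by
  obtain ⟨hε0, hεlt1⟩ := hε
  have hf' : ∀ x y, f ε x y = ε * comp2 R1 L1 x * comp2 R2 B2 y := by
    intro x y; rw [hf]; rfl
  have hg' : ∀ x y, g ε x y = ε * comp2 R1 B1 x * comp2 R2 L2 y := by
    intro x y; rw [hg]; rfl
  -- membership lemmas
  have hfmem : ∀ x y, x ∈ Icc (0:ℝ) 1 → y ∈ Icc (0:ℝ) 1 → f ε x y ∈ Icc (0:ℝ) 1 := by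
    intro x y hx hy
    rw [hf']
    have ha := comp2_mem R1 L1 hR1c hL1c hR1one hL1one hx.1 hx.2
    have hb := comp2_mem R2 B2 hR2c hB2c hR2one hB2one hy.1 hy.2
    constructor
    · exact mul_nonneg (mul_nonneg hε0.le ha.1) hb.1
    · exact mul_le_one₀ (mul_le_one₀ hεlt1.le ha.1 ha.2) hb.1 hb.2
  have hgmem : ∀ x y, x ∈ Icc (0:ℝ) 1 → y ∈ Icc (0:ℝ) 1 → g ε x y ∈ Icc (0:ℝ) 1 := by
    intro x y hx hy
    rw [hg']
    have ha := comp2_mem R1 B1 hR1c hB1c hR1one hB1one hx.1 hx.2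
    have hb := comp2_mem R2 L2 hR2c hL2c hR2one hL2one hy.1 hy.2
    constructor
    · exact mul_nonneg (mul_nonneg hε0.le ha.1) hb.1
    · exact mul_le_one₀ (mul_le_one₀ hεlt1.le ha.1 ha.2) hb.1 hb.2
  -- monotonicity lemmas
  have hfmono : ∀ x x' y y', 0 ≤ x → x' ≤ 1 → 0 ≤ y → y' ≤ 1 → x ≤ x' → y ≤ y' →
      f ε x y ≤ f ε x' y' := by
    intro x x' y y' hx0 hx'1 hy0 hy'1 hxx' hyy'
    rw [hf', hf']
    have ha := comp2_mono R1 L1 hR1c hL1c hR1one hx0 hx'1 hxx'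
    have hb := comp2_mono R2 B2 hR2c hB2c hR2one hy0 hy'1 hyy'
    have ha0 := (comp2_mem R1 L1 hR1c hL1c hR1one hL1one hx0 (hxx'.trans hx'1)).1
    have ha' := comp2_mem R1 L1 hR1c hL1c hR1one hL1one (hx0.trans hxx') hx'1
    have hb0 := (comp2_mem R2 B2 hR2c hB2c hR2one hB2one hy0 (hyy'.trans hy'1)).1
    exact mul_le_mul (mul_le_mul_of_nonneg_left ha hε0.le) hb hb0
      (mul_nonneg hε0.le ha'.1)
  have hgmono : ∀ x x' y y', 0 ≤ x → x' ≤ 1 → 0 ≤ y → y' ≤ 1 → x ≤ x' → y ≤ y' →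
      g ε x y ≤ g ε x' y' := by
    intro x x' y y' hx0 hx'1 hy0 hy'1 hxx' hyy'
    rw [hg', hg']
    have ha := comp2_mono R1 B1 hR1c hB1c hR1one hx0 hx'1 hxx'
    have hb := comp2_mono R2 L2 hR2c hL2c hR2one hy0 hy'1 hyy'
    have ha0 := (comp2_mem R1 B1 hR1c hB1c hR1one hB1one hx0 (hxx'.trans hx'1)).1
    have ha' := comp2_mem R1 B1 hR1c hB1c hR1one hB1one (hx0.trans hxx') hx'1
    have hb0 := (comp2_mem R2 L2 hR2c hL2c hR2one hL2one hy0 (hyy'.trans hy'1)).1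
    exact mul_le_mul (mul_le_mul_of_nonneg_left ha hε0.le) hb hb0
      (mul_nonneg hε0.le ha'.1)
  -- which update happens
  have hyscase : ∀ l, ys (l+1) = g ε (xs l) (ys l) ∨ ys (l+1) = ys l := by
    intro l
    rcases Nat.eq_zero_or_pos l with rfl | hl
    · exact Or.inl hys1
    · by_cases hc : |xs (l - 1) - xs l| ≤ η ∧ ε1 ≤ ε * B2.eval (1 - R2.eval (1 - ys l))
      · exact Or.inl ((hysrec l hl).1 hc)
      · exact Or.inr ((hysrec l hl).2 hc)
  -- the main invariant
  have inv : ∀ l, (xs l ∈ Icc (0:ℝ) 1) ∧ (ys l ∈ Icc (0:ℝ) 1) ∧ xs (l+1) ≤ xs l ∧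
      ys (l+1) ≤ ys l ∧ g ε (xs l) (ys l) ≤ ys l := by
    intro l
    induction l with
    | zero =>
      have hxmem : xs 0 ∈ Icc (0:ℝ) 1 := by rw [hxs0]; exact ⟨zero_le_one, le_refl 1⟩
      have hymem : ys 0 ∈ Icc (0:ℝ) 1 := by rw [hys0]; exact ⟨zero_le_one, le_refl 1⟩
      have hgle : g ε (xs 0) (ys 0) ≤ ys 0 :=
        ((hgmem _ _ hxmem hymem).2).trans_eq hys0.symm
      refine ⟨hxmem, hymem, ?_, ?_, hgle⟩
      · calc xs 1 = f ε (xs 0) (ys 0) := hxsrec 0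
          _ ≤ 1 := (hfmem _ _ hxmem hymem).2
          _ = xs 0 := hxs0.symm
      · calc ys 1 = g ε (xs 0) (ys 0) := hys1
          _ ≤ 1 := (hgmem _ _ hxmem hymem).2
          _ = ys 0 := hys0.symm
    | succ l ih =>
      obtain ⟨hx, hy, hxd, hyd, hgle⟩ := ih
      have hx' : xs (l+1) ∈ Icc (0:ℝ) 1 := by
        rw [hxsrec l]; exact hfmem _ _ hx hy
      have hy' : ys (l+1) ∈ Icc (0:ℝ) 1 := by
        rcases hyscase l with h | h
        · rw [h]; exact hgmem _ _ hx hy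
        · rw [h]; exact hy
      have hgmono' : g ε (xs (l+1)) (ys (l+1)) ≤ g ε (xs l) (ys l) :=
        hgmono _ _ _ _ hx'.1 hx.2 hy'.1 hy.2 hxd hyd
      have hgle' : g ε (xs (l+1)) (ys (l+1)) ≤ ys (l+1) := by
        rcases hyscase l with h | h
        · exact hgmono'.trans_eq h.symm
        · exact (hgmono'.trans hgle).trans_eq h.symm
      refine ⟨hx', hy', ?_, ?_, hgle'⟩
      · calc xs (l+2) = f ε (xs (l+1)) (ys (l+1)) := hxsrec (l+1)
          _ ≤ f ε (xs l) (ys l) := hfmono _ _ _ _ hx'.1 hx.2 hy'.1 hy.2 hxd hyd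
          _ = xs (l+1) := (hxsrec l).symm
      · rcases hyscase (l+1) with h | h
        · rw [h]; exact hgle'
        · rw [h]
  have hx01 : ∀ l, xs l ∈ Icc (0:ℝ) 1 := fun l => (inv l).1
  have hy01 : ∀ l, ys l ∈ Icc (0:ℝ) 1 := fun l => (inv l).2.1
  have hxanti : Antitone xs := antitone_nat_of_succ_le fun l => (inv l).2.2.1
  have hyanti : Antitone ys := antitone_nat_of_succ_le fun l => (inv l).2.2.2.1
  have hxbdd : BddBelow (range xs) := ⟨0, by rintro z ⟨l, rfl⟩; exact (hx01 l).1⟩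
  have hybdd : BddBelow (range ys) := ⟨0, by rintro z ⟨l, rfl⟩; exact (hy01 l).1⟩
  set xst := ⨅ l, xs l with hxstdef
  set yst := ⨅ l, ys l with hystdef
  have hxlim : Tendsto xs atTop (nhds xst) := tendsto_atTop_ciInf hxanti hxbdd
  have hylim : Tendsto ys atTop (nhds yst) := tendsto_atTop_ciInf hyanti hybdd
  have hxst0 : 0 ≤ xst := le_ciInf fun l => (hx01 l).1
  have hxst1 : xst ≤ 1 := (ciInf_le hxbdd 0).trans hxs0.le
  have hyst0 : 0 ≤ yst := le_ciInf fun l => (hy01 l).1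
  have hyst1 : yst ≤ 1 := (ciInf_le hybdd 0).trans hys0.le
  have hxlim' : Tendsto (fun l => xs (l+1)) atTop (nhds xst) :=
    hxlim.comp (tendsto_add_atTop_nat 1)
  have hylim' : Tendsto (fun l => ys (l+1)) atTop (nhds yst) :=
    hylim.comp (tendsto_add_atTop_nat 1)
  have hpair : Tendsto (fun l => (xs l, ys l)) atTop (nhds (xst, yst)) :=
    hxlim.prodMk_nhds hylim
  suffices hz : xst = 0 by rw [← hz]; exact hxlim
  by_contra hne
  have hpos : 0 < xst := lt_of_le_of_ne hxst0 (Ne.symm hne)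
  -- lower bound on ε1
  have hbdd : BddBelow ((fun x => x / L1.eval (1 - R1.eval (1 - x))) '' Ioc (0:ℝ) 1) := by
    refine ⟨0, ?_⟩
    rintro z ⟨x, hx, rfl⟩
    have h0 : 0 ≤ comp2 R1 L1 x := (comp2_mem R1 L1 hR1c hL1c hR1one hL1one hx.1.le hx.2).1
    exact div_nonneg hx.1.le h0
  have hε1le : ∀ x, x ∈ Ioc (0:ℝ) 1 → ε1 ≤ x / L1.eval (1 - R1.eval (1 - x)) := by
    intro x hx
    rw [hε1]
    exact csInf_le hbdd ⟨x, hx, rfl⟩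
  by_cases hcase : ∀ l, 1 ≤ l → ε1 ≤ ε * B2.eval (1 - R2.eval (1 - ys l))
  · -- schedule active eventually: limit is a fixed point, contradiction
    have hdiff : Tendsto (fun l => xs l - xs (l+1)) atTop (nhds 0) := by
      have h := hxlim.sub hxlim'
      simpa using h
    have hev : ∀ᶠ l in atTop, xs l - xs (l+1) < η := hdiff.eventually_lt_const hη
    obtain ⟨N, hN⟩ := eventually_atTop.mp hev
    have hgev : ∀ l, N + 1 ≤ l → ys (l+1) = g ε (xs l) (ys l) := by
      intro l hl
      have hl1 : 1 ≤ l := le_trans (by omega) hl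
      apply (hysrec l hl1).1
      refine ⟨?_, hcase l hl1⟩
      have hlm : N ≤ l - 1 := by omega
      have heq : l - 1 + 1 = l := by omega
      have h1 := hN (l-1) hlm
      have hd : 0 ≤ xs (l-1) - xs (l-1+1) := sub_nonneg.mpr ((inv (l-1)).2.2.1)
      rw [heq] at h1 hd
      rw [abs_of_nonneg hd]
      linarith
    have hftend : Tendsto (fun l => f ε (xs l) (ys l)) atTop (nhds (f ε xst yst)) := by
      have hc : Continuous (fun p : ℝ × ℝ => f ε p.1 p.2) := by
        simp only [hf']
        exact (continuous_const.mul ((comp2_continuous R1 L1).comp continuous_fst)).mul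
          ((comp2_continuous R2 B2).comp continuous_snd)
      exact (hc.tendsto (xst, yst)).comp hpair
    have hgtend : Tendsto (fun l => g ε (xs l) (ys l)) atTop (nhds (g ε xst yst)) := by
      have hc : Continuous (fun p : ℝ × ℝ => g ε p.1 p.2) := by
        simp only [hg']
        exact (continuous_const.mul ((comp2_continuous R1 B1).comp continuous_fst)).mul
          ((comp2_continuous R2 L2).comp continuous_snd)
      exact (hc.tendsto (xst, yst)).comp hpair
    have hfeq : xst = f ε xst yst := by
      refine tendsto_nhds_unique hxlim' (hftend.congr' ?_)
      filter_upwards with l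
      exact (hxsrec l).symm
    have hgeq : yst = g ε xst yst := by
      refine tendsto_nhds_unique hylim' (hgtend.congr' ?_)
      filter_upwards [eventually_ge_atTop (N+1)] with l hl
      exact (hgev l hl).symm
    exact hnofix ⟨xst, yst, ⟨hpos, hxst1⟩, ⟨hyst0, hyst1⟩, hfeq, hgeq⟩
  · -- schedule switched off at some point: y frozen, x iterates to a small fixed point
    push_neg at hcase
    obtain ⟨l0, hl0, hlt⟩ := hcase
    have hfreeze : ∀ k, ys (l0 + k) = ys l0 := by
      intro k
      induction k with
      | zero => rfl
      | succ k ih =>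
        have h1 : 1 ≤ l0 + k := le_trans hl0 (Nat.le_add_right _ _)
        have hstep : ys (l0 + k + 1) = ys (l0 + k) := by
          apply (hysrec (l0+k) h1).2
          rintro ⟨-, hcc⟩
          rw [ih] at hcc
          exact absurd hcc (not_le.mpr hlt)
        exact hstep.trans ih
    have hfreeze' : ∀ l, l0 ≤ l → ys l = ys l0 := by
      intro l hl
      have := hfreeze (l - l0)
      rwa [Nat.add_sub_cancel' hl] at this
    have hctend : Tendsto (fun l => f ε (xs l) (ys l0)) atTop (nhds (f ε xst (ys l0))) := by
      have hc : Continuous (fun x : ℝ => f ε x (ys l0)) := by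
        simp only [hf']
        exact (continuous_const.mul (comp2_continuous R1 L1)).mul continuous_const
      exact (hc.tendsto xst).comp hxlim
    have heq : xst = f ε xst (ys l0) := by
      refine tendsto_nhds_unique hxlim' (hctend.congr' ?_)
      filter_upwards [eventually_ge_atTop l0] with l hl
      rw [hxsrec l, hfreeze' l hl]
    rw [hf ε] at heq
    set A := L1.eval (1 - R1.eval (1 - xst)) with hA
    set B := B2.eval (1 - R2.eval (1 - ys l0)) with hB
    have hAmem : A ∈ Icc (0:ℝ) 1 :=
      comp2_mem R1 L1 hR1c hL1c hR1one hL1one hxst0 hxst1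
    rcases lt_or_eq_of_le hAmem.1 with hApos | hA0
    · have h2 : ε1 * A ≤ xst := (le_div_iff₀ hApos).mp (hε1le xst ⟨hpos, hxst1⟩)
      have h3 : (ε * B) * A < ε1 * A := mul_lt_mul_of_pos_right hlt hApos
      have h4 : ε * A * B = (ε * B) * A := by ring
      linarith
    · rw [← hA0] at heq
      simp at heq
      linarith
end

section
/- Let 0 < ε1 < ε < 1 and, for each k ∈ ℕ, let λ^{(k)}, ρ^{(k)} : ℝ → ℝ be polynomial functions with nonnegative coefficients satisfying λ^{(k)}(1) = ρ^{(k)}(1) = 1. Assume the sequence is capacity-approaching for the BEC(ε1): for every x ∈ [0, ε1], ε1·λ^{(k)}(1−ρ^{(k)}(1−x)) → x as k → ∞. Define x_s^{(k)}(ε) := sup{ x ∈ [0,1] : ε·λ^{(k)}(1−ρ^{(k)}(1−x)) ≥ x }. Then lim_{k→∞} x_s^{(k)}(ε) = ε. -/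
open Polynomial Set Filter

lemma stmt17_eval_nonneg (p : Polynomial ℝ) (h : ∀ i, 0 ≤ p.coeff i) {a : ℝ} (ha : 0 ≤ a) :
    0 ≤ p.eval a := by
  rw [Polynomial.eval_eq_sum_range]
  exact Finset.sum_nonneg fun i _ => mul_nonneg (h i) (pow_nonneg ha i)

lemma stmt17_eval_mono (p : Polynomial ℝ) (h : ∀ i, 0 ≤ p.coeff i) {a b : ℝ}
    (ha : 0 ≤ a) (hab : a ≤ b) : p.eval a ≤ p.eval b := by
  rw [Polynomial.eval_eq_sum_range, Polynomial.eval_eq_sum_range]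
  exact Finset.sum_le_sum fun i _ =>
    mul_le_mul_of_nonneg_left (pow_le_pow_left₀ ha hab i) (h i)

/-- Lemma 10: for a capacity-approaching sequence for the BEC(`ε1`) and `ε1 < ε < 1`,
the stuck points converge to `ε`. -/
theorem stmt_17
    (ε1 ε : ℝ) (hε1pos : 0 < ε1) (hε1ε : ε1 < ε) (hεlt : ε < 1)
    (lam rho : ℕ → Polynomial ℝ)
    (hlamc : ∀ k i, 0 ≤ (lam k).coeff i) (hrhoc : ∀ k i, 0 ≤ (rho k).coeff i)
    (hlamone : ∀ k, (lam k).eval 1 = 1) (hrhoone : ∀ k, (rho k).eval 1 = 1)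
    (hca : ∀ x ∈ Icc (0:ℝ) ε1,
      Tendsto (fun k => ε1 * (lam k).eval (1 - (rho k).eval (1 - x))) atTop (nhds x))
    (xstuck : ℕ → ℝ)
    (hxstuck : ∀ k, xstuck k =
      sSup {x : ℝ | x ∈ Icc (0:ℝ) 1 ∧ x ≤ ε * (lam k).eval (1 - (rho k).eval (1 - x))}) :
    Tendsto xstuck atTop (nhds ε) := by
  have hεpos : (0:ℝ) < ε := hε1pos.trans hε1ε
  set f : ℕ → ℝ → ℝ := fun k x => (lam k).eval (1 - (rho k).eval (1 - x)) with hf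
  -- basic facts about the argument t = 1 - rho(1-x) for x ∈ [0,1]
  have harg : ∀ k x, 0 ≤ x → x ≤ 1 →
      0 ≤ 1 - (rho k).eval (1 - x) ∧ 1 - (rho k).eval (1 - x) ≤ 1 := by
    intro k x hx0 hx1
    constructor
    · have : (rho k).eval (1 - x) ≤ (rho k).eval 1 :=
        stmt17_eval_mono (rho k) (hrhoc k) (by linarith) (by linarith)
      rw [hrhoone k] at this; linarith
    · have : 0 ≤ (rho k).eval (1 - x) :=
        stmt17_eval_nonneg (rho k) (hrhoc k) (by linarith)
      linarith
  have hfnonneg : ∀ k x, 0 ≤ x → x ≤ 1 → 0 ≤ f k x := by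
    intro k x hx0 hx1
    exact stmt17_eval_nonneg (lam k) (hlamc k) (harg k x hx0 hx1).1
  have hfle1 : ∀ k x, 0 ≤ x → x ≤ 1 → f k x ≤ 1 := by
    intro k x hx0 hx1
    have := stmt17_eval_mono (lam k) (hlamc k) (harg k x hx0 hx1).1 (harg k x hx0 hx1).2
    rw [hlamone k] at this; exact this
  have hfmono : ∀ k x y, 0 ≤ x → x ≤ y → y ≤ 1 → f k x ≤ f k y := by
    intro k x y hx0 hxy hy1
    have h1 : (rho k).eval (1 - y) ≤ (rho k).eval (1 - x) :=
      stmt17_eval_mono (rho k) (hrhoc k) (by linarith) (by linarith)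
    exact stmt17_eval_mono (lam k) (hlamc k) (harg k x hx0 (hxy.trans hy1)).1 (by linarith)
  set S : ℕ → Set ℝ := fun k => {x : ℝ | x ∈ Icc (0:ℝ) 1 ∧ x ≤ ε * f k x} with hS
  have h0mem : ∀ k, (0:ℝ) ∈ S k := fun k =>
    ⟨⟨le_refl 0, zero_le_one⟩, mul_nonneg hεpos.le (hfnonneg k 0 le_rfl zero_le_one)⟩
  have hbdd : ∀ k, BddAbove (S k) := fun k => ⟨1, fun x hx => hx.1.2⟩
  have hub : ∀ k, xstuck k ≤ ε := by
    intro k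
    rw [hxstuck k]
    refine csSup_le ⟨0, h0mem k⟩ fun x hx => ?_
    have := mul_le_mul_of_nonneg_left (hfle1 k x hx.1.1 hx.1.2) hεpos.le
    have := hx.2
    simp only [mul_one] at *
    linarith
  rw [tendsto_order]
  constructor
  · intro a ha
    set x0 : ℝ := max ε1 ((a + ε) / 2) with hx0def
    have hax0 : a < x0 := lt_of_lt_of_le (by linarith) (le_max_right _ _)
    have hx0ε : x0 < ε := max_lt hε1ε (by linarith)
    have hx0ε1 : ε1 ≤ x0 := le_max_left _ _
    have hx0pos : 0 < x0 := hε1pos.trans_le hx0ε1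
    have hx0le1 : x0 ≤ 1 := (hx0ε.trans hεlt).le
    have ht : Tendsto (fun k => ε1 * f k ε1) atTop (nhds ε1) :=
      hca ε1 ⟨hε1pos.le, le_rfl⟩
    have hlt : ε1 * (x0 / ε) < ε1 :=
      mul_lt_of_lt_one_right hε1pos ((div_lt_one hεpos).2 hx0ε)
    have hev : ∀ᶠ k in atTop, ε1 * (x0 / ε) < ε1 * f k ε1 :=
      ht.eventually_const_lt hlt
    filter_upwards [hev] with k hk
    have h1 : x0 / ε < f k ε1 := (mul_lt_mul_iff_right₀ hε1pos).1 hk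
    have h2 : x0 < ε * f k ε1 := (div_lt_iff₀' hεpos).1 h1
    have h3 : f k ε1 ≤ f k x0 := hfmono k ε1 x0 hε1pos.le hx0ε1 hx0le1
    have hmem : x0 ∈ S k :=
      ⟨⟨hx0pos.le, hx0le1⟩, le_trans h2.le (by nlinarith)⟩
    have : x0 ≤ xstuck k := by
      rw [hxstuck k]; exact le_csSup (hbdd k) hmem
    linarith
  · intro a ha
    exact Eventually.of_forall fun k => lt_of_le_of_lt (hub k) ha
end
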